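/- Suppose that I_χ ≠ R, that grade I_χ > |ρ| + 1, that grade I_λ > |ρ| + 1, and that r = k + 1 where k = r + 1 - grade I_χ (so r = l). Then the sequence 0 → 𝓕 →χ 𝓖 →λ 𝓗 is exact (χ is injective and ker λ = im χ), the dual sequence 0 → 𝓗* →λ* 𝓖* →χ* 𝓕* is exact (λ* is injective and ker χ* = im λ*), and moreover I_χ = I_λ. -/

import Mathlib

/-- The ideal generated by the `k × k` minors of a matrix. -/
def Matrix.minorsIdeal {R : Type*} [CommRing R] {p q : ℕ}
    (A : Matrix (Fin p) (Fin q) R) (k : ℕ) : Ideal R :=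
  Ideal.span {x | ∃ (f : Fin k → Fin p) (g : Fin k → Fin q),
    Function.Injective f ∧ Function.Injective g ∧ x = (A.submatrix f g).det}

/-- `I.gradeGE k` means `grade I ≥ k`: there is a weakly `R`-regular sequence of
length `k` consisting of elements of `I`.  (For a proper ideal of a Noetherian
ring such a sequence is automatically a regular sequence, and for `I = R` this
holds for every `k`, corresponding to the convention `grade R = ∞`.) -/
def Ideal.gradeGE {R : Type*} [CommRing R] (I : Ideal R) (k : ℕ) : Prop :=
  ∃ rs : List R, rs.length = k ∧ (∀ x ∈ rs, x ∈ I) ∧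
    RingTheory.Sequence.IsWeaklyRegular R rs

/-- The ideal of maximal minors of a linear map between the standard finite
free modules `R^a` and `R^b`, i.e. the ideal generated by the
`min a b × min a b` minors of the matrix representing the map. -/
noncomputable def LinearMap.maxMinors {R : Type*} [CommRing R] {a b : ℕ}
    (χ : (Fin a → R) →ₗ[R] (Fin b → R)) : Ideal R :=
  (LinearMap.toMatrix' χ).minorsIdeal (min a b)

/-- A map of finite free modules is minimal if the entries of a matrix
representing it generate a proper ideal of `R`. -/
def LinearMap.MinimalFree {R : Type*} [CommRing R] {a b : ℕ}
    (χ : (Fin a → R) →ₗ[R] (Fin b → R)) : Prop :=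
  Ideal.span {x | ∃ i j, LinearMap.toMatrix' χ i j = x} ≠ ⊤


set_option linter.unusedSectionVars false
set_option maxHeartbeats 1000000
open Matrix
open Pointwise

namespace StmtAux

variable {R : Type*} [CommRing R]

lemma reg_cancel {t : R} (ht : IsSMulRegular R t) {x y : R} (h : t * x = t * y) : x = y :=
  ht (by simpa [smul_eq_mul] using h)

/-- If each `b i ^ k` lies in an ideal `J`, then a high enough power of any
linear combination of the `b i` lies in `J`. -/
lemma pow_linear_combination_mem {ι : Type*} [DecidableEq ι] (J : Ideal R) (k : ℕ) :
    ∀ (s : Finset ι) (c b : ι → R), (∀ i ∈ s, b i ^ k ∈ J) →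
    ∀ e, s.card * k + 1 ≤ e → (∑ i ∈ s, c i * b i) ^ e ∈ J := by
  intro s
  induction s using Finset.induction_on with
  | empty =>
    intro c b _ e he
    simp only [Finset.sum_empty]
    rw [zero_pow (by omega)]
    exact J.zero_mem
  | @insert a s ha ih =>
    intro c b hb e he
    rw [Finset.card_insert_of_notMem ha, add_mul, one_mul] at he
    rw [Finset.sum_insert ha, add_pow]
    refine Ideal.sum_mem _ fun i hi => ?_
    rw [Finset.mem_range] at hi
    rcases le_or_gt k i with hk | hk
    · have hba : b a ^ i ∈ J := by
        have : b a ^ i = b a ^ k * b a ^ (i - k) := by rw [← pow_add]; congr 1; omega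
        rw [this]
        exact J.mul_mem_right _ (hb a (Finset.mem_insert_self a s))
      have h1 : (c a * b a) ^ i ∈ J := by
        rw [mul_pow]; exact J.mul_mem_left _ hba
      exact J.mul_mem_right _ (J.mul_mem_right _ h1)
    · have hsum : (∑ x ∈ s, c x * b x) ^ (e - i) ∈ J :=
        ih c b (fun j hj => hb j (Finset.mem_insert_of_mem hj)) (e - i) (by omega)
      exact J.mul_mem_right _ (J.mul_mem_left _ hsum)

lemma reg_mod_pow_left {t s : R} (ht : IsSMulRegular R t)
    (hs : ∀ x, s * x ∈ Ideal.span {t} → x ∈ Ideal.span {t}) :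
    ∀ (a : ℕ) (x : R), s * x ∈ Ideal.span {t ^ a} → x ∈ Ideal.span {t ^ a} := by
  intro a
  induction a with
  | zero => intro x _; rw [pow_zero, Ideal.span_singleton_one]; trivial
  | succ a ih =>
    intro x hx
    obtain ⟨r, hr⟩ := Ideal.mem_span_singleton'.mp hx
    have h1 : s * x ∈ Ideal.span {t} := by
      rw [Ideal.mem_span_singleton']
      exact ⟨r * t ^ a, by rw [← hr]; ring⟩
    obtain ⟨x₁, hx₁⟩ := Ideal.mem_span_singleton'.mp (hs x h1)
    have h2 : t * (s * x₁) = t * (r * t ^ a) := by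
      rw [← hx₁] at hr; linear_combination -hr
    have h3 := reg_cancel ht h2
    obtain ⟨q, hq⟩ := Ideal.mem_span_singleton'.mp
      (ih x₁ (Ideal.mem_span_singleton'.mpr ⟨r, h3.symm⟩))
    exact Ideal.mem_span_singleton'.mpr ⟨q, by rw [← hx₁, ← hq]; ring⟩

lemma reg_mod_pow {t s : R} (ht : IsSMulRegular R t)
    (hs : ∀ x, s * x ∈ Ideal.span {t} → x ∈ Ideal.span {t}) (a e : ℕ) :
    ∀ x, s ^ e * x ∈ Ideal.span {t ^ a} → x ∈ Ideal.span {t ^ a} := by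
  have hse : ∀ x, s ^ e * x ∈ Ideal.span {t} → x ∈ Ideal.span {t} := by
    induction e with
    | zero => intro x hx; rw [pow_zero, one_mul] at hx; exact hx
    | succ e ih =>
      intro x hx
      rw [pow_succ] at hx
      have hx' : s * (s ^ e * x) ∈ Ideal.span {t} := by
        have he : s * (s ^ e * x) = s ^ e * s * x := by ring
        rwa [he]
      exact ih x (hs _ hx')
  exact reg_mod_pow_left ht hse a



section Core

variable {M L N : Type*} [Fintype M] [Fintype L] [Fintype N]
  [DecidableEq M] [DecidableEq L] [DecidableEq N]

/-- maximal minor of `A` on the rows selected by `σ ∘ inl`. -/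
noncomputable def um (A : Matrix N M R) (σ : (M ⊕ L) ≃ N) : R :=
  (A.submatrix (⇑σ ∘ Sum.inl) id).det

/-- maximal minor of `B` on the columns selected by `σ ∘ inr`. -/
noncomputable def bm (B : Matrix L N R) (σ : (M ⊕ L) ≃ N) : R :=
  (B.submatrix id (⇑σ ∘ Sum.inr)).det

/-- sign of `σ` relative to a fixed base equivalence `e₀`. -/
noncomputable def eps (e₀ σ : (M ⊕ L) ≃ N) : R :=
  ((Equiv.Perm.sign (σ.trans e₀.symm) : ℤ) : R)

lemma eps_mul_self (e₀ σ : (M ⊕ L) ≃ N) : eps (R := R) e₀ σ * eps e₀ σ = 1 := by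
  unfold eps
  rw [← Int.cast_mul, ← Units.val_mul, Int.units_mul_self, Units.val_one, Int.cast_one]

noncomputable def IA (A : Matrix N M R) : Ideal R := Ideal.span (Set.range (um (L := L) A))
noncomputable def IB (B : Matrix L N R) : Ideal R := Ideal.span (Set.range (bm (M := M) B))

variable (A : Matrix N M R) (B : Matrix L N R)

/-- the `K`-matrix: Cramer-style right factor with `B * K = 0` and
`K * (rows σ∘inl of A) = bm σ • A`. -/
noncomputable def Kmat (ν : (M ⊕ L) ≃ N) : Matrix (M ⊕ L) M R :=
  fromRows (bm (M := M) B ν • (1 : Matrix M M R))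
    (-((B.submatrix id (⇑ν ∘ Sum.inr)).adjugate * B.submatrix id (⇑ν ∘ Sum.inl)))

noncomputable def Kc (ν : (M ⊕ L) ≃ N) : Matrix N M R := (Kmat B ν).submatrix ν.symm id

lemma mul_submatrix_symm (C : Matrix L N R) (X : Matrix (M ⊕ L) M R) (e : (M ⊕ L) ≃ N) :
    C * (X.submatrix e.symm id) = (C.submatrix id ⇑e) * X := by
  ext q k
  simp only [Matrix.mul_apply, Matrix.submatrix_apply, id_eq]
  exact Fintype.sum_equiv e.symm _ _ (fun i => by simp)

lemma submatrix_row_mul {P Q : Type*} [Fintype Q] (X : Matrix P Q R) (Y : Matrix Q M R)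
    {P' : Type*} (f : P' → P) :
    (X.submatrix f id) * Y = (X * Y).submatrix f id := by
  ext i k
  simp [Matrix.mul_apply]

lemma submatrix_B_eq (ν : (M ⊕ L) ≃ N) :
    B.submatrix id ⇑ν = fromCols (B.submatrix id (⇑ν ∘ Sum.inl)) (B.submatrix id (⇑ν ∘ Sum.inr)) := by
  ext q c
  cases c <;> simp

lemma submatrix_A_eq (ν : (M ⊕ L) ≃ N) :
    A.submatrix ⇑ν id = fromRows (A.submatrix (⇑ν ∘ Sum.inl) id) (A.submatrix (⇑ν ∘ Sum.inr) id) := by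
  ext c k
  cases c <;> simp

lemma split_BA (hBA : B * A = 0) (ν : (M ⊕ L) ≃ N) :
    (B.submatrix id (⇑ν ∘ Sum.inl)) * (A.submatrix (⇑ν ∘ Sum.inl) id)
      + (B.submatrix id (⇑ν ∘ Sum.inr)) * (A.submatrix (⇑ν ∘ Sum.inr) id) = 0 := by
  have h := Matrix.submatrix_mul_equiv B A (id : L → L) ν (id : M → M)
  rw [submatrix_B_eq, submatrix_A_eq, fromCols_mul_fromRows, hBA] at h
  simpa using h

lemma B_mul_K (ν : (M ⊕ L) ≃ N) : B * Kc B ν = 0 := by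
  rw [Kc, mul_submatrix_symm, submatrix_B_eq, Kmat, fromCols_mul_fromRows]
  rw [Matrix.mul_smul, Matrix.mul_one, Matrix.mul_neg, ← Matrix.mul_assoc,
    Matrix.mul_adjugate, Matrix.smul_mul, Matrix.one_mul]
  simp [bm]

lemma K_mul_rA (hBA : B * A = 0) (ν : (M ⊕ L) ≃ N) :
    Kc B ν * (A.submatrix (⇑ν ∘ Sum.inl) id) = bm (M := M) B ν • A := by
  rw [Kc, submatrix_row_mul]
  have e1 : (bm (M := M) B ν • (1 : Matrix M M R)) * (A.submatrix (⇑ν ∘ Sum.inl) id)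
      = (bm (M := M) B ν • A).submatrix (⇑ν ∘ Sum.inl) id := by
    rw [Matrix.smul_mul, Matrix.one_mul]
    ext j k; simp
  have e2 : (-((B.submatrix id (⇑ν ∘ Sum.inr)).adjugate * B.submatrix id (⇑ν ∘ Sum.inl)))
        * (A.submatrix (⇑ν ∘ Sum.inl) id)
      = (bm (M := M) B ν • A).submatrix (⇑ν ∘ Sum.inr) id := by
    have hs := split_BA A B hBA ν
    have h2 : (B.submatrix id (⇑ν ∘ Sum.inl)) * (A.submatrix (⇑ν ∘ Sum.inl) id)
        = -((B.submatrix id (⇑ν ∘ Sum.inr)) * (A.submatrix (⇑ν ∘ Sum.inr) id)) :=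
      eq_neg_of_add_eq_zero_left hs
    rw [Matrix.neg_mul, Matrix.mul_assoc, h2, Matrix.mul_neg, neg_neg, ← Matrix.mul_assoc,
      Matrix.adjugate_mul, Matrix.smul_mul, Matrix.one_mul]
    ext p k; simp [bm]
  have h : Kmat B ν * A.submatrix (⇑ν ∘ Sum.inl) id = (bm (M := M) B ν • A).submatrix ⇑ν id := by
    rw [Kmat, fromRows_mul, e1, e2, ← submatrix_A_eq]
  rw [h, Matrix.submatrix_submatrix]
  simp

noncomputable def kap (ν σ : (M ⊕ L) ≃ N) : R := ((Kc B ν).submatrix (⇑σ ∘ Sum.inl) id).det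

lemma kappa_um (hBA : B * A = 0) (ν σ : (M ⊕ L) ≃ N) :
    kap B ν σ * um A ν = bm (M := M) B ν ^ Fintype.card M * um A σ := by
  have h := congrArg (fun X : Matrix M M R => X.det)
    (congrArg (fun Y : Matrix N M R => Matrix.submatrix Y (⇑σ ∘ Sum.inl) (id : M → M))
      (K_mul_rA A B hBA ν))
  rw [← submatrix_row_mul, Matrix.det_mul] at h
  have e3 : (bm (M := M) B ν • A).submatrix (⇑σ ∘ Sum.inl) (id : M → M)
      = bm (M := M) B ν • (A.submatrix (⇑σ ∘ Sum.inl) id) := by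
    ext j k; simp
  rw [e3, Matrix.det_smul] at h
  exact h

noncomputable def Xmat (ν σ : (M ⊕ L) ≃ N) : Matrix N (M ⊕ L) R :=
  fromCols (Kc B ν) (Matrix.of fun i p => if i = σ (Sum.inr p) then (1 : R) else 0)

noncomputable def Zmat (ν : (M ⊕ L) ≃ N) : Matrix (M ⊕ L) N R :=
  fromRows (Matrix.of fun j i => if i = ν (Sum.inl j) then (1 : R) else 0) B

lemma detX (ν σ e₀ : (M ⊕ L) ≃ N) :
    ((Xmat B ν σ).submatrix ⇑e₀ id).det = eps e₀ σ * kap B ν σ := by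
  have step1 : (Xmat B ν σ).submatrix ⇑σ id
      = fromBlocks ((Kc B ν).submatrix (⇑σ ∘ Sum.inl) id) 0
          ((Kc B ν).submatrix (⇑σ ∘ Sum.inr) id) (1 : Matrix L L R) := by
    ext c d
    cases c <;> cases d <;>
      simp [Xmat, fromBlocks, Matrix.one_apply, σ.injective.eq_iff]
  have hcomp : (Xmat B ν σ).submatrix ⇑e₀ id
      = ((Xmat B ν σ).submatrix ⇑σ id).submatrix ⇑(e₀.trans σ.symm) id := by
    rw [Matrix.submatrix_submatrix]
    congr 1
    ext c
    simp
  rw [hcomp, Matrix.det_permute, step1, Matrix.det_fromBlocks_zero₁₂, Matrix.det_one, mul_one]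
  congr 1
  unfold eps
  have : e₀.trans σ.symm = (σ.trans e₀.symm).symm := by ext c; simp
  rw [this, Equiv.Perm.sign_symm]

lemma detZ (ν e₀ : (M ⊕ L) ≃ N) :
    ((Zmat B ν).submatrix id ⇑e₀).det = eps e₀ ν * bm (M := M) B ν := by
  have step1 : (Zmat B ν).submatrix id ⇑ν
      = fromBlocks (1 : Matrix M M R) 0
          (B.submatrix id (⇑ν ∘ Sum.inl)) (B.submatrix id (⇑ν ∘ Sum.inr)) := by
    ext c d
    cases c <;> cases d <;>
      simp [Zmat, fromBlocks, Matrix.one_apply, ν.injective.eq_iff, eq_comm]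
  have hcomp : (Zmat B ν).submatrix id ⇑e₀
      = ((Zmat B ν).submatrix id ⇑ν).submatrix id ⇑(e₀.trans ν.symm) := by
    rw [Matrix.submatrix_submatrix]
    congr 1
    ext c
    simp
  rw [hcomp, Matrix.det_permute', step1, Matrix.det_fromBlocks_zero₁₂, Matrix.det_one, one_mul]
  congr 1
  unfold eps
  have : e₀.trans ν.symm = (ν.trans e₀.symm).symm := by ext c; simp
  rw [this, Equiv.Perm.sign_symm]

lemma ZXprod (ν σ e₀ : (M ⊕ L) ≃ N) :
    ((Zmat B ν).submatrix id ⇑e₀) * ((Xmat B ν σ).submatrix ⇑e₀ id)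
      = fromBlocks (bm (M := M) B ν • (1 : Matrix M M R))
          (Matrix.of fun j p => if ν (Sum.inl j) = σ (Sum.inr p) then (1 : R) else 0)
          0 (B.submatrix id (⇑σ ∘ Sum.inr)) := by
  rw [Matrix.submatrix_mul_equiv, Matrix.submatrix_id_id]
  rw [Zmat, Xmat, fromRows_mul_fromCols]
  have b11 : (Matrix.of fun j i => if i = ν (Sum.inl j) then (1 : R) else 0) * Kc B ν
      = bm (M := M) B ν • (1 : Matrix M M R) := by
    ext j k
    rw [Matrix.mul_apply]
    simp only [Matrix.of_apply, ite_mul, one_mul, zero_mul, Finset.sum_ite_eq]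
    simp [Kc, Kmat]
  have b12 : (Matrix.of fun j i => if i = ν (Sum.inl j) then (1 : R) else 0)
        * (Matrix.of fun i p => if i = σ (Sum.inr p) then (1 : R) else 0)
      = Matrix.of fun j p => if ν (Sum.inl j) = σ (Sum.inr p) then (1 : R) else 0 := by
    ext j p
    rw [Matrix.mul_apply]
    simp only [Matrix.of_apply, ite_mul, one_mul, zero_mul, Finset.sum_ite_eq]
    simp
  have b21 : B * Kc B ν = 0 := B_mul_K B ν
  have b22 : B * (Matrix.of fun i p => if i = σ (Sum.inr p) then (1 : R) else 0)
      = B.submatrix id (⇑σ ∘ Sum.inr) := by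
    ext q p
    rw [Matrix.mul_apply]
    simp [mul_ite, Finset.sum_ite_eq']
  rw [b11, b12, b21, b22]

lemma cross (ν σ e₀ : (M ⊕ L) ≃ N) :
    (eps e₀ ν * bm (M := M) B ν) * (eps e₀ σ * kap B ν σ)
      = bm (M := M) B ν ^ Fintype.card M * bm (M := M) B σ := by
  have h := congrArg Matrix.det (ZXprod B ν σ e₀)
  rw [Matrix.det_mul, detZ, detX, Matrix.det_fromBlocks_zero₂₁, Matrix.det_smul,
    Matrix.det_one, mul_one] at h
  exact h

lemma starkill (hBA : B * A = 0) (e₀ ν σ τ : (M ⊕ L) ≃ N) :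
    bm (M := M) B ν ^ (Fintype.card M + 1) * (um A σ * (eps e₀ τ * bm (M := M) B τ))
      = bm (M := M) B ν ^ (Fintype.card M + 1) * (um A τ * (eps e₀ σ * bm (M := M) B σ)) := by
  have h1 := kappa_um A B hBA ν σ
  have h1' := kappa_um A B hBA ν τ
  have h2 := cross B ν σ e₀
  have h2' := cross B ν τ e₀
  have e1 := eps_mul_self (R := R) e₀ ν
  have e2 := eps_mul_self (R := R) e₀ σ
  have e3 := eps_mul_self (R := R) e₀ τ
  have hbk : bm (M := M) B ν * kap B ν σ
      = eps e₀ ν * eps e₀ σ * (bm (M := M) B ν ^ Fintype.card M * bm (M := M) B σ) := by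
    calc bm (M := M) B ν * kap B ν σ
        = (eps e₀ ν * eps e₀ ν) * ((eps e₀ σ * eps e₀ σ) * (bm (M := M) B ν * kap B ν σ)) := by
          rw [e1, e2]; ring
      _ = eps e₀ ν * eps e₀ σ * ((eps e₀ ν * bm (M := M) B ν) * (eps e₀ σ * kap B ν σ)) := by
          ring
      _ = _ := by rw [h2]
  have hbk' : bm (M := M) B ν * kap B ν τ
      = eps e₀ ν * eps e₀ τ * (bm (M := M) B ν ^ Fintype.card M * bm (M := M) B τ) := by
    calc bm (M := M) B ν * kap B ν τ
        = (eps e₀ ν * eps e₀ ν) * ((eps e₀ τ * eps e₀ τ) * (bm (M := M) B ν * kap B ν τ)) := by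
          rw [e1, e3]; ring
      _ = eps e₀ ν * eps e₀ τ * ((eps e₀ ν * bm (M := M) B ν) * (eps e₀ τ * kap B ν τ)) := by
          ring
      _ = _ := by rw [h2']
  calc bm (M := M) B ν ^ (Fintype.card M + 1) * (um A σ * (eps e₀ τ * bm (M := M) B τ))
      = (kap B ν σ * um A ν) * (bm (M := M) B ν * (eps e₀ τ * bm (M := M) B τ)) := by
        rw [h1]; ring
    _ = (um A ν * eps e₀ τ * bm (M := M) B τ) * (bm (M := M) B ν * kap B ν σ) := by ring
    _ = (um A ν * eps e₀ τ * bm (M := M) B τ)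
          * (eps e₀ ν * eps e₀ σ * (bm (M := M) B ν ^ Fintype.card M * bm (M := M) B σ)) := by
        rw [hbk]
    _ = (um A ν * eps e₀ σ * bm (M := M) B σ)
          * (eps e₀ ν * eps e₀ τ * (bm (M := M) B ν ^ Fintype.card M * bm (M := M) B τ)) := by
        ring
    _ = (um A ν * eps e₀ σ * bm (M := M) B σ) * (bm (M := M) B ν * kap B ν τ) := by rw [hbk']
    _ = (kap B ν τ * um A ν) * (bm (M := M) B ν * (eps e₀ σ * bm (M := M) B σ)) := by ring
    _ = _ := by rw [h1']; ring

lemma star (hBA : B * A = 0) (e₀ : (M ⊕ L) ≃ N) {t' : R} (ht' : t' ∈ IB (M := M) B)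
    (hreg : IsSMulRegular R t') (σ τ : (M ⊕ L) ≃ N) :
    um A σ * (eps e₀ τ * bm (M := M) B τ) = um A τ * (eps e₀ σ * bm (M := M) B σ) := by
  set D := um A σ * (eps e₀ τ * bm (M := M) B τ) - um A τ * (eps e₀ σ * bm (M := M) B σ) with hD
  have hwk : ∀ ν : (M ⊕ L) ≃ N, bm (M := M) B ν ^ (Fintype.card M + 1) * D = 0 := by
    intro ν
    rw [hD, mul_sub, starkill A B hBA e₀ ν σ τ, sub_self]
  obtain ⟨nn, f, gg, hsum⟩ := Submodule.mem_span_set'.mp ht'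
  set J : Ideal R := LinearMap.ker (LinearMap.toSpanSingleton R R D) with hJ
  have hmem : ∀ x : R, x ∈ J ↔ x * D = 0 := fun x => by
    simp [hJ, LinearMap.mem_ker, LinearMap.toSpanSingleton_apply, smul_eq_mul]
  have hpow : t' ^ (nn * (Fintype.card M + 1) + 1) ∈ J := by
    rw [← hsum]
    have hsum' : (∑ i, f i • (gg i : R)) = ∑ i, f i * (gg i : R) := by
      simp [smul_eq_mul]
    rw [hsum']
    refine pow_linear_combination_mem J (Fintype.card M + 1) Finset.univ f
      (fun i => (gg i : R)) ?_ _ (by simp)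
    intro i _
    obtain ⟨ν, hν⟩ := (gg i).2
    rw [hmem]
    show ((gg i : R)) ^ (Fintype.card M + 1) * D = 0
    rw [← hν]
    exact hwk ν
  have hfin : t' ^ (nn * (Fintype.card M + 1) + 1) * D = 0 := (hmem _).mp hpow
  have : D = 0 := reg_cancel (hreg.pow _) (by rw [hfin, mul_zero])
  exact sub_eq_zero.mp this

lemma unit_rel (hBA : B * A = 0) (e₀ : (M ⊕ L) ≃ N)
    {t s t' s' : R} (ht : t ∈ IA (L := L) A) (hs : s ∈ IA (L := L) A)
    (ht' : t' ∈ IB (M := M) B) (hs' : s' ∈ IB (M := M) B)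
    (htreg : IsSMulRegular R t) (ht'reg : IsSMulRegular R t')
    (hsreg : ∀ x, s * x ∈ Ideal.span {t} → x ∈ Ideal.span {t})
    (hs'reg : ∀ x, s' * x ∈ Ideal.span {t'} → x ∈ Ideal.span {t'}) :
    ∃ h h' : R, h * h' = 1 ∧ (∀ τ, eps e₀ τ * bm (M := M) B τ = h * um A τ)
      ∧ (∀ τ, um A τ = h' * (eps e₀ τ * bm (M := M) B τ)) := by
  classical
  have star' : ∀ σ τ : (M ⊕ L) ≃ N,
      um A σ * (eps e₀ τ * bm (M := M) B τ) = um A τ * (eps e₀ σ * bm (M := M) B σ) :=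
    star A B hBA e₀ ht' ht'reg
  -- representation of t
  obtain ⟨n1, c1, g1, hsum1⟩ := Submodule.mem_span_set'.mp ht
  have hg1 : ∀ i, ∃ σ, um A σ = (g1 i : R) := fun i => (g1 i).2
  choose σ1 hσ1 using hg1
  have hsum1' : t = ∑ i, c1 i * um A (σ1 i) := by
    rw [← hsum1]; exact Finset.sum_congr rfl fun i _ => by rw [smul_eq_mul, hσ1]
  obtain ⟨n2, c2, g2, hsum2⟩ := Submodule.mem_span_set'.mp hs
  choose σ2 hσ2 using fun i => (g2 i).2
  have hsum2' : s = ∑ i, c2 i * um A (σ2 i) := by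
    rw [← hsum2]; exact Finset.sum_congr rfl fun i _ => by rw [smul_eq_mul, hσ2]
  set d := ∑ i, c1 i * (eps e₀ (σ1 i) * bm (M := M) B (σ1 i)) with hd_def
  set d' := ∑ i, c2 i * (eps e₀ (σ2 i) * bm (M := M) B (σ2 i)) with hd'_def
  have hd : ∀ τ, d * um A τ = t * (eps e₀ τ * bm (M := M) B τ) := by
    intro τ
    rw [hd_def, hsum1', Finset.sum_mul, Finset.sum_mul]
    exact Finset.sum_congr rfl fun i _ => by linear_combination (-(c1 i)) * star' (σ1 i) τ
  have hd' : ∀ τ, d' * um A τ = s * (eps e₀ τ * bm (M := M) B τ) := by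
    intro τ
    rw [hd'_def, hsum2', Finset.sum_mul, Finset.sum_mul]
    exact Finset.sum_congr rfl fun i _ => by linear_combination (-(c2 i)) * star' (σ2 i) τ
  have k1 : ∀ τ : (M ⊕ L) ≃ N, (t * d' - s * d) * um A τ = 0 := fun τ => by
    linear_combination t * hd' τ - s * hd τ
  have hzmul : ∀ x : R, (∀ ρ : (M ⊕ L) ≃ N, x * um A ρ = 0) → x * t = 0 := by
    intro x hx
    rw [hsum1', Finset.mul_sum]
    exact Finset.sum_eq_zero fun i _ => by linear_combination (c1 i) * hx (σ1 i)
  have k2 : (t * d' - s * d) * t = 0 := hzmul _ k1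
  have k3 : t * d' = s * d := by
    have := reg_cancel htreg (show t * (t * d' - s * d) = t * 0 by linear_combination k2)
    linear_combination this
  have hdmem : d ∈ Ideal.span {t} := by
    refine hsreg d (Ideal.mem_span_singleton'.mpr ⟨d', by linear_combination k3⟩)
  obtain ⟨h, hh⟩ := Ideal.mem_span_singleton'.mp hdmem
  have hw : ∀ τ, eps e₀ τ * bm (M := M) B τ = h * um A τ := by
    intro τ
    refine reg_cancel htreg ?_
    have h1 := hd τ
    rw [← hh] at h1
    linear_combination -h1
  -- representation of t'
  obtain ⟨n3, c3, g3, hsum3⟩ := Submodule.mem_span_set'.mp ht'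
  choose τ3 hτ3 using fun i => (g3 i).2
  have hsum3' : t' = ∑ i, c3 i * bm (M := M) B (τ3 i) := by
    rw [← hsum3]; exact Finset.sum_congr rfl fun i _ => by rw [smul_eq_mul, hτ3]
  obtain ⟨n4, c4, g4, hsum4⟩ := Submodule.mem_span_set'.mp hs'
  choose τ4 hτ4 using fun i => (g4 i).2
  have hsum4' : s' = ∑ i, c4 i * bm (M := M) B (τ4 i) := by
    rw [← hsum4]; exact Finset.sum_congr rfl fun i _ => by rw [smul_eq_mul, hτ4]
  set f := ∑ i, c3 i * (eps e₀ (τ3 i) * um A (τ3 i)) with hf_def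
  set f' := ∑ i, c4 i * (eps e₀ (τ4 i) * um A (τ4 i)) with hf'_def
  have hf : ∀ ρ, f * (eps e₀ ρ * bm (M := M) B ρ) = t' * um A ρ := by
    intro ρ
    rw [hf_def, hsum3', Finset.sum_mul, Finset.sum_mul]
    refine Finset.sum_congr rfl fun i _ => ?_
    linear_combination (c3 i * eps e₀ (τ3 i)) * star' (τ3 i) ρ
      + (c3 i * um A ρ * bm (M := M) B (τ3 i)) * eps_mul_self (R := R) e₀ (τ3 i)
  have hf' : ∀ ρ, f' * (eps e₀ ρ * bm (M := M) B ρ) = s' * um A ρ := by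
    intro ρ
    rw [hf'_def, hsum4', Finset.sum_mul, Finset.sum_mul]
    refine Finset.sum_congr rfl fun i _ => ?_
    linear_combination (c4 i * eps e₀ (τ4 i)) * star' (τ4 i) ρ
      + (c4 i * um A ρ * bm (M := M) B (τ4 i)) * eps_mul_self (R := R) e₀ (τ4 i)
  have k1' : ∀ ρ : (M ⊕ L) ≃ N, (t' * f' - s' * f) * (eps e₀ ρ * bm (M := M) B ρ) = 0 :=
    fun ρ => by linear_combination t' * hf' ρ - s' * hf ρ
  have k1'' : ∀ ρ : (M ⊕ L) ≃ N, (t' * f' - s' * f) * bm (M := M) B ρ = 0 := fun ρ => by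
    linear_combination (eps e₀ ρ) * k1' ρ
      - ((t' * f' - s' * f) * bm (M := M) B ρ) * eps_mul_self (R := R) e₀ ρ
  have hzmul' : ∀ x : R, (∀ ρ : (M ⊕ L) ≃ N, x * bm (M := M) B ρ = 0) → x * t' = 0 := by
    intro x hx
    rw [hsum3', Finset.mul_sum]
    exact Finset.sum_eq_zero fun i _ => by linear_combination (c3 i) * hx (τ3 i)
  have k2' : (t' * f' - s' * f) * t' = 0 := hzmul' _ k1''
  have k3' : t' * f' = s' * f := by
    have := reg_cancel ht'reg (show t' * (t' * f' - s' * f) = t' * 0 by linear_combination k2')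
    linear_combination this
  have hfmem : f ∈ Ideal.span {t'} := by
    refine hs'reg f (Ideal.mem_span_singleton'.mpr ⟨f', by linear_combination k3'⟩)
  obtain ⟨h', hh'⟩ := Ideal.mem_span_singleton'.mp hfmem
  have hu : ∀ ρ, um A ρ = h' * (eps e₀ ρ * bm (M := M) B ρ) := by
    intro ρ
    refine reg_cancel ht'reg ?_
    have h1 := hf ρ
    rw [← hh'] at h1
    linear_combination -h1
  have hz : ∀ ρ : (M ⊕ L) ≃ N, (1 - h * h') * um A ρ = 0 := by
    intro ρ
    linear_combination hu ρ + h' * hw ρ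
  have hz2 : (1 - h * h') * t = 0 := hzmul _ hz
  have hunit : h * h' = 1 := by
    have := reg_cancel htreg (show t * (1 - h * h') = t * 0 by linear_combination hz2)
    linear_combination -this
  exact ⟨h, h', hunit, hw, hu⟩

lemma IA_eq_IB (hBA : B * A = 0) (e₀ : (M ⊕ L) ≃ N)
    {t s t' s' : R} (ht : t ∈ IA (L := L) A) (hs : s ∈ IA (L := L) A)
    (ht' : t' ∈ IB (M := M) B) (hs' : s' ∈ IB (M := M) B)
    (htreg : IsSMulRegular R t) (ht'reg : IsSMulRegular R t')
    (hsreg : ∀ x, s * x ∈ Ideal.span {t} → x ∈ Ideal.span {t})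
    (hs'reg : ∀ x, s' * x ∈ Ideal.span {t'} → x ∈ Ideal.span {t'}) :
    IA (L := L) A = IB (M := M) B := by
  obtain ⟨h, h', hh1, hw, hu⟩ := unit_rel A B hBA e₀ ht hs ht' hs' htreg ht'reg hsreg hs'reg
  apply le_antisymm
  · rw [IA, Ideal.span_le]
    rintro x ⟨ρ, rfl⟩
    have h1 : um A ρ = (h' * eps e₀ ρ) * bm (M := M) B ρ := by
      have := hu ρ; linear_combination this
    rw [h1]
    exact Ideal.mul_mem_left _ _ (Ideal.subset_span ⟨ρ, rfl⟩)
  · rw [IB, Ideal.span_le]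
    rintro x ⟨ρ, rfl⟩
    have h1 : bm (M := M) B ρ = (eps e₀ ρ * h) * um A ρ := by
      linear_combination eps e₀ ρ * hw ρ - (bm (M := M) B ρ) * eps_mul_self (R := R) e₀ ρ
    rw [h1]
    exact Ideal.mul_mem_left _ _ (Ideal.subset_span ⟨ρ, rfl⟩)

lemma diag_smul_mem_range (hBA : B * A = 0) {v : N → R} (hv : B.mulVec v = 0)
    (σ : (M ⊕ L) ≃ N) :
    ∃ y : M → R, A.mulVec y = (um A σ * bm (M := M) B σ) • v := by
  classical
  set rA := A.submatrix (⇑σ ∘ Sum.inl) (id : M → M) with hrA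
  set y₀ := rA.adjugate.mulVec (fun j => v (σ (Sum.inl j))) with hy₀
  set δ := um A σ • v - A.mulVec y₀ with hδ
  have hδ1 : ∀ j, δ (σ (Sum.inl j)) = 0 := by
    intro j
    have h1 : (A.mulVec y₀) (σ (Sum.inl j)) = (rA.mulVec y₀) j := by
      simp [Matrix.mulVec, dotProduct, hrA]
    have h2 : rA.mulVec y₀ = (um A σ • (1 : Matrix M M R)).mulVec (fun j => v (σ (Sum.inl j))) := by
      rw [hy₀, Matrix.mulVec_mulVec, Matrix.mul_adjugate]
      rfl
    rw [hδ]
    simp only [Pi.sub_apply, Pi.smul_apply, smul_eq_mul]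
    rw [h1, h2, Matrix.smul_mulVec, Matrix.one_mulVec]
    simp
  have hδ2 : B.mulVec δ = 0 := by
    rw [hδ, Matrix.mulVec_sub, Matrix.mulVec_smul, hv, Matrix.mulVec_mulVec, hBA]
    simp
  have hδ3 : ∀ i, bm (M := M) B σ * δ i = 0 := by
    set cB := B.submatrix (id : L → L) (⇑σ ∘ Sum.inr) with hcB
    have h3 : cB.mulVec (fun p => δ (σ (Sum.inr p))) = 0 := by
      funext q
      have h0 := congrFun hδ2 q
      simp only [Matrix.mulVec, dotProduct, Pi.zero_apply] at h0 ⊢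
      calc ∑ p, cB q p * δ (σ (Sum.inr p))
          = ∑ c : M ⊕ L, B q (σ c) * δ (σ c) := by
            rw [Fintype.sum_sum_type]
            simp [hcB, hδ1]
        _ = ∑ i, B q i * δ i := Fintype.sum_equiv σ _ _ (fun c => rfl)
        _ = 0 := h0
    have h4 : ∀ p, bm (M := M) B σ * δ (σ (Sum.inr p)) = 0 := by
      intro p
      have h5 := congrFun (congrArg cB.adjugate.mulVec h3) p
      rw [Matrix.mulVec_mulVec, Matrix.adjugate_mul, Matrix.smul_mulVec,
        Matrix.one_mulVec] at h5
      simpa [bm, hcB] using h5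
    intro i
    obtain ⟨c, rfl⟩ : ∃ c, σ c = i := ⟨σ.symm i, by simp⟩
    cases c with
    | inl j => rw [hδ1]; ring
    | inr p => exact h4 p
  refine ⟨bm (M := M) B σ • y₀, ?_⟩
  funext i
  have h6 : (A.mulVec (bm (M := M) B σ • y₀)) i = bm (M := M) B σ * (A.mulVec y₀) i := by
    rw [Matrix.mulVec_smul]; simp
  have h7 : (A.mulVec y₀) i = um A σ * v i - δ i := by
    rw [hδ]; simp
  rw [h6, h7]
  have := hδ3 i
  simp only [Pi.smul_apply, smul_eq_mul]
  linear_combination -this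

lemma inj_of_reg {t : R} (ht : t ∈ IA (L := L) A) (htreg : IsSMulRegular R t)
    {v : M → R} (hv : A.mulVec v = 0) : v = 0 := by
  classical
  have hum : ∀ (σ : (M ⊕ L) ≃ N) (k : M), um A σ * v k = 0 := by
    intro σ k
    set rA := A.submatrix (⇑σ ∘ Sum.inl) (id : M → M) with hrA
    have h1 : rA.mulVec v = 0 := by
      funext j
      have := congrFun hv (σ (Sum.inl j))
      simpa [Matrix.mulVec, dotProduct, hrA] using this
    have h2 := congrFun (congrArg rA.adjugate.mulVec h1) k
    rw [Matrix.mulVec_mulVec, Matrix.adjugate_mul, Matrix.smul_mulVec,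
      Matrix.one_mulVec] at h2
    simpa [um, hrA] using h2
  obtain ⟨nn, c, gg, hsum⟩ := Submodule.mem_span_set'.mp ht
  funext k
  have h3 : t * v k = 0 := by
    rw [← hsum, Finset.sum_mul]
    refine Finset.sum_eq_zero fun i _ => ?_
    obtain ⟨σ, hσ⟩ := (gg i).2
    rw [smul_eq_mul, mul_assoc,
      show ((gg i : R)) * v k = 0 by rw [← hσ]; exact hum σ k, mul_zero]
  have h4 := reg_cancel htreg (show t * v k = t * 0 by rw [h3, mul_zero])
  simpa using h4

lemma exact_at_mid (hBA : B * A = 0) (e₀ : (M ⊕ L) ≃ N)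
    {t s t' s' : R} (ht : t ∈ IA (L := L) A) (hs : s ∈ IA (L := L) A)
    (ht' : t' ∈ IB (M := M) B) (hs' : s' ∈ IB (M := M) B)
    (htreg : IsSMulRegular R t) (ht'reg : IsSMulRegular R t')
    (hsreg : ∀ x, s * x ∈ Ideal.span {t} → x ∈ Ideal.span {t})
    (hs'reg : ∀ x, s' * x ∈ Ideal.span {t'} → x ∈ Ideal.span {t'})
    {v : N → R} (hv : B.mulVec v = 0) : ∃ y, A.mulVec y = v := by
  classical
  obtain ⟨h, h', hh1, hw, hu⟩ := unit_rel A B hBA e₀ ht hs ht' hs' htreg ht'reg hsreg hs'reg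
  set J : Ideal R := Submodule.comap (LinearMap.toSpanSingleton R (N → R) v)
    (LinearMap.range (Matrix.mulVecLin A)) with hJdef
  have hmem : ∀ x : R, x ∈ J ↔ ∃ y, A.mulVec y = x • v := by
    intro x
    simp [hJdef, LinearMap.toSpanSingleton_apply, Matrix.mulVecLin_apply]
  have husq : ∀ σ : (M ⊕ L) ≃ N, um A σ * um A σ ∈ J := by
    intro σ
    have hdiag : um A σ * bm (M := M) B σ ∈ J :=
      (hmem _).mpr (diag_smul_mem_range A B hBA hv σ)
    have hexp : (eps e₀ σ * h') * (um A σ * bm (M := M) B σ) = um A σ * um A σ := by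
      linear_combination (h' * um A σ) * hw σ + (um A σ * um A σ) * hh1
    rw [← hexp]
    exact Ideal.mul_mem_left _ _ hdiag
  obtain ⟨n1, c1, g1, hsum1⟩ := Submodule.mem_span_set'.mp ht
  obtain ⟨n2, c2, g2, hsum2⟩ := Submodule.mem_span_set'.mp hs
  have htpow : t ^ (n1 * 2 + 1) ∈ J := by
    rw [← hsum1, show (∑ i, c1 i • (g1 i : R)) = ∑ i, c1 i * (g1 i : R) by simp [smul_eq_mul]]
    refine pow_linear_combination_mem J 2 Finset.univ c1 (fun i => (g1 i : R)) ?_ _ (by simp)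
    intro i _
    obtain ⟨σ, hσ⟩ := (g1 i).2
    show ((g1 i : R)) ^ 2 ∈ J
    rw [← hσ, pow_two]
    exact husq σ
  have hspow : s ^ (n2 * 2 + 1) ∈ J := by
    rw [← hsum2, show (∑ i, c2 i • (g2 i : R)) = ∑ i, c2 i * (g2 i : R) by simp [smul_eq_mul]]
    refine pow_linear_combination_mem J 2 Finset.univ c2 (fun i => (g2 i : R)) ?_ _ (by simp)
    intro i _
    obtain ⟨σ, hσ⟩ := (g2 i).2
    show ((g2 i : R)) ^ 2 ∈ J
    rw [← hσ, pow_two]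
    exact husq σ
  set T := t ^ (n1 * 2 + 1) with hT
  set S := s ^ (n2 * 2 + 1) with hS
  obtain ⟨y₁, hy₁⟩ := (hmem _).mp htpow
  obtain ⟨y₂, hy₂⟩ := (hmem _).mp hspow
  have hTreg : IsSMulRegular R T := htreg.pow _
  have hSmod : ∀ x, S * x ∈ Ideal.span {T} → x ∈ Ideal.span {T} :=
    reg_mod_pow htreg hsreg _ _
  have hker : A.mulVec (S • y₁ - T • y₂) = 0 := by
    rw [Matrix.mulVec_sub, Matrix.mulVec_smul, Matrix.mulVec_smul, hy₁, hy₂]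
    funext i
    simp only [Pi.sub_apply, Pi.smul_apply, smul_eq_mul, Pi.zero_apply]
    ring
  have h5 : S • y₁ - T • y₂ = 0 := inj_of_reg A ht htreg hker
  have h6 : ∀ j, y₁ j ∈ Ideal.span {T} := by
    intro j
    have h7 := congrFun h5 j
    simp only [Pi.sub_apply, Pi.smul_apply, smul_eq_mul, Pi.zero_apply, sub_eq_zero] at h7
    exact hSmod _ (Ideal.mem_span_singleton'.mpr ⟨y₂ j, by linear_combination -h7⟩)
  choose z hzz using fun j => Ideal.mem_span_singleton'.mp (h6 j)
  refine ⟨z, ?_⟩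
  have hy₁' : y₁ = T • z := by
    funext j
    rw [← hzz j]
    simp [smul_eq_mul, mul_comm]
  rw [hy₁', Matrix.mulVec_smul] at hy₁
  funext i
  refine reg_cancel hTreg ?_
  have := congrFun hy₁ i
  simpa [smul_eq_mul] using this

end Core

end StmtAux

namespace StmtAux

section Interface

variable {R : Type*} [CommRing R]

lemma mem_pointwise_smul_top_iff (a x : R) :
    x ∈ a • (⊤ : Submodule R R) ↔ x ∈ Ideal.span {a} := by
  rw [Ideal.mem_span_singleton', ← SetLike.mem_coe, Submodule.coe_pointwise_smul,
    Set.mem_smul_set]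
  constructor
  · rintro ⟨y, -, rfl⟩; exact ⟨y, by rw [smul_eq_mul, mul_comm]⟩
  · rintro ⟨y, rfl⟩; exact ⟨y, by trivial, by rw [smul_eq_mul, mul_comm]⟩

lemma quot_reg_one {a c : R} (h : IsSMulRegular (QuotSMulTop a R) c) :
    ∀ x, c * x ∈ Ideal.span {a} → x ∈ Ideal.span {a} := by
  intro x hx
  have h1 : c • (Submodule.Quotient.mk x : QuotSMulTop a R) = c • 0 := by
    rw [smul_zero, ← Submodule.Quotient.mk_smul, smul_eq_mul, Submodule.Quotient.mk_eq_zero]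
    exact (mem_pointwise_smul_top_iff a _).mpr hx
  have h2 := h h1
  rw [Submodule.Quotient.mk_eq_zero] at h2
  exact (mem_pointwise_smul_top_iff a _).mp h2

lemma quot_reg_two {a b c : R}
    (h : IsSMulRegular (QuotSMulTop b (QuotSMulTop a R)) c) :
    ∀ x, c * x ∈ Ideal.span {a, b} → x ∈ Ideal.span {a, b} := by
  intro x hx
  obtain ⟨u1, v1, huv⟩ := Ideal.mem_span_pair.mp hx
  have h1 : (Submodule.Quotient.mk (c * x) : QuotSMulTop a R)
      = b • (Submodule.Quotient.mk v1 : QuotSMulTop a R) := by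
    rw [← Submodule.Quotient.mk_smul, smul_eq_mul]
    rw [Submodule.Quotient.eq]
    rw [mem_pointwise_smul_top_iff, Ideal.mem_span_singleton']
    exact ⟨u1, by linear_combination huv⟩
  have h2 : c • (Submodule.Quotient.mk (Submodule.Quotient.mk x : QuotSMulTop a R) :
      QuotSMulTop b (QuotSMulTop a R)) = c • 0 := by
    rw [smul_zero, ← Submodule.Quotient.mk_smul, ← Submodule.Quotient.mk_smul, smul_eq_mul, h1,
      Submodule.Quotient.mk_eq_zero]
    exact Submodule.smul_mem_pointwise_smul _ b ⊤ Submodule.mem_top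
  have h3 := h h2
  rw [Submodule.Quotient.mk_eq_zero, ← SetLike.mem_coe, Submodule.coe_pointwise_smul,
    Set.mem_smul_set] at h3
  obtain ⟨q, -, hq⟩ := h3
  obtain ⟨w, rfl⟩ := Submodule.Quotient.mk_surjective _ q
  rw [← Submodule.Quotient.mk_smul, smul_eq_mul] at hq
  have h5 := (Submodule.Quotient.eq _).mp hq
  rw [mem_pointwise_smul_top_iff, Ideal.mem_span_singleton'] at h5
  obtain ⟨u2, hu2⟩ := h5
  exact Ideal.mem_span_pair.mpr ⟨-u2, w, by linear_combination -hu2⟩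

open RingTheory.Sequence in
lemma grade_two_extract {I : Ideal R} {k : ℕ} (h : I.gradeGE k) (hk : 2 ≤ k) :
    ∃ t s : R, t ∈ I ∧ s ∈ I ∧ IsSMulRegular R t ∧
      (∀ x, s * x ∈ Ideal.span {t} → x ∈ Ideal.span {t}) := by
  obtain ⟨rs, hlen, hmem, hreg⟩ := h
  rcases rs with _ | ⟨t, _ | ⟨s, rest⟩⟩
  · simp at hlen; omega
  · simp at hlen; omega
  · rw [isWeaklyRegular_cons_iff] at hreg
    obtain ⟨ht, hreg2⟩ := hreg
    rw [isWeaklyRegular_cons_iff] at hreg2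
    obtain ⟨hs, -⟩ := hreg2
    exact ⟨t, s, hmem t (by simp), hmem s (by simp), ht, quot_reg_one hs⟩

open RingTheory.Sequence in
lemma grade_three_extract {I : Ideal R} {k : ℕ} (h : I.gradeGE k) (hk : 3 ≤ k) :
    ∃ t s u : R, t ∈ I ∧ s ∈ I ∧ u ∈ I ∧ IsSMulRegular R t ∧
      (∀ x, s * x ∈ Ideal.span {t} → x ∈ Ideal.span {t}) ∧
      (∀ x, u * x ∈ Ideal.span {t, s} → x ∈ Ideal.span {t, s}) := by
  obtain ⟨rs, hlen, hmem, hreg⟩ := h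
  rcases rs with _ | ⟨t, _ | ⟨s, _ | ⟨u, rest⟩⟩⟩
  · simp at hlen; omega
  · simp at hlen; omega
  · simp at hlen; omega
  · rw [isWeaklyRegular_cons_iff] at hreg
    obtain ⟨ht, hreg2⟩ := hreg
    rw [isWeaklyRegular_cons_iff] at hreg2
    obtain ⟨hs, hreg3⟩ := hreg2
    rw [isWeaklyRegular_cons_iff] at hreg3
    obtain ⟨hu, -⟩ := hreg3
    exact ⟨t, s, u, hmem t (by simp), hmem s (by simp), hmem u (by simp), ht,
      quot_reg_one hs, quot_reg_two hu⟩

lemma exists_equiv_inl {M L N : Type*} [Fintype M] [Fintype L] [Fintype N] [DecidableEq N]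
    (hcard : Fintype.card M + Fintype.card L = Fintype.card N)
    (f : M → N) (hf : Function.Injective f) :
    ∃ σ : (M ⊕ L) ≃ N, ∀ j, σ (Sum.inl j) = f j := by
  classical
  have h1 : Fintype.card L = Fintype.card ↥(Set.range f)ᶜ := by
    rw [Fintype.card_compl_set, Set.card_range_of_injective hf]; omega
  obtain ⟨e₂⟩ := Fintype.card_eq.mp h1
  set F : M ⊕ L → N := Sum.elim f (fun p => (e₂ p : N)) with hF
  have hinj : Function.Injective F := by
    rintro (a | a) (b | b) h <;> simp only [hF, Sum.elim_inl, Sum.elim_inr] at h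
    · rw [hf h]
    · exact absurd ⟨a, h⟩ (e₂ b).2
    · exact absurd ⟨b, h.symm⟩ (e₂ a).2
    · rw [e₂.injective (Subtype.ext h)]
  have hbij : Function.Bijective F :=
    (Fintype.bijective_iff_injective_and_card F).mpr ⟨hinj, by simp [hcard]⟩
  exact ⟨Equiv.ofBijective F hbij, fun j => rfl⟩

lemma exists_equiv_inr {M L N : Type*} [Fintype M] [Fintype L] [Fintype N] [DecidableEq N]
    (hcard : Fintype.card M + Fintype.card L = Fintype.card N)
    (g : L → N) (hg : Function.Injective g) :
    ∃ σ : (M ⊕ L) ≃ N, ∀ p, σ (Sum.inr p) = g p := by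
  obtain ⟨σ', hσ'⟩ := exists_equiv_inl (M := L) (L := M) (by omega) g hg
  exact ⟨(Equiv.sumComm M L).trans σ', fun p => by simp [hσ']⟩

lemma minorsIdeal_A_eq {m l n : ℕ} (hmln : m + l = n) (A : Matrix (Fin n) (Fin m) R) :
    A.minorsIdeal m = IA (L := Fin l) A := by
  unfold Matrix.minorsIdeal IA
  apply le_antisymm <;> rw [Ideal.span_le] <;> intro x hx
  · obtain ⟨f, g, hf, hg, rfl⟩ := hx
    have hgb : Function.Bijective g := Finite.injective_iff_bijective.mp hg
    set ge := Equiv.ofBijective g hgb with hge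
    obtain ⟨σ, hσ⟩ := exists_equiv_inl (L := Fin l) (by simpa using hmln) f hf
    have h1 : A.submatrix f g = (A.submatrix (⇑σ ∘ Sum.inl) id).submatrix id ⇑ge := by
      ext i j
      simp [hσ, hge]
    have h2 : (A.submatrix f g).det
        = ((Equiv.Perm.sign ge : ℤ) : R) * um A σ := by
      rw [h1, Matrix.det_permute']
      rfl
    rw [SetLike.mem_coe, h2]
    exact Ideal.mul_mem_left _ _ (Ideal.subset_span ⟨σ, rfl⟩)
  · obtain ⟨σ, rfl⟩ := hx
    exact Ideal.subset_span
      ⟨⇑σ ∘ Sum.inl, id, σ.injective.comp Sum.inl_injective, Function.injective_id, rfl⟩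

lemma minorsIdeal_B_eq {m l n : ℕ} (hmln : m + l = n) (B : Matrix (Fin l) (Fin n) R) :
    B.minorsIdeal l = IB (M := Fin m) B := by
  unfold Matrix.minorsIdeal IB
  apply le_antisymm <;> rw [Ideal.span_le] <;> intro x hx
  · obtain ⟨f, g, hf, hg, rfl⟩ := hx
    have hfb : Function.Bijective f := Finite.injective_iff_bijective.mp hf
    set fe := Equiv.ofBijective f hfb with hfe
    obtain ⟨σ, hσ⟩ := exists_equiv_inr (M := Fin m) (by simpa using hmln) g hg
    have h1 : B.submatrix f g = (B.submatrix id (⇑σ ∘ Sum.inr)).submatrix ⇑fe id := by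
      ext i j
      simp [hσ, hfe]
    have h2 : (B.submatrix f g).det
        = ((Equiv.Perm.sign fe : ℤ) : R) * bm (M := Fin m) B σ := by
      rw [h1, Matrix.det_permute]
      rfl
    rw [SetLike.mem_coe, h2]
    exact Ideal.mul_mem_left _ _ (Ideal.subset_span ⟨σ, rfl⟩)
  · obtain ⟨σ, rfl⟩ := hx
    exact Ideal.subset_span
      ⟨id, ⇑σ ∘ Sum.inr, Function.injective_id, σ.injective.comp Sum.inr_injective, rfl⟩

lemma um_transpose {M L N : Type*} [Fintype M] [Fintype L] [Fintype N]
    [DecidableEq M] [DecidableEq L] [DecidableEq N]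
    (B : Matrix L N R) (σ' : (L ⊕ M) ≃ N) :
    um (L := M) Bᵀ σ' = bm (M := M) B ((Equiv.sumComm M L).trans σ') := by
  unfold um bm
  rw [← Matrix.det_transpose (B.submatrix id _)]
  congr 1

lemma bm_transpose {M L N : Type*} [Fintype M] [Fintype L] [Fintype N]
    [DecidableEq M] [DecidableEq L] [DecidableEq N]
    (A : Matrix N M R) (σ' : (L ⊕ M) ≃ N) :
    bm (M := L) Aᵀ σ' = um (L := L) A ((Equiv.sumComm M L).trans σ') := by
  unfold um bm
  rw [← Matrix.det_transpose (A.submatrix _ id)]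
  congr 1

lemma IA_transpose {M L N : Type*} [Fintype M] [Fintype L] [Fintype N]
    [DecidableEq M] [DecidableEq L] [DecidableEq N] (B : Matrix L N R) :
    IA (L := M) Bᵀ = IB (M := M) B := by
  unfold IA IB
  congr 1
  ext x
  constructor
  · rintro ⟨σ', rfl⟩
    exact ⟨(Equiv.sumComm M L).trans σ', (um_transpose B σ').symm⟩
  · rintro ⟨σ, rfl⟩
    refine ⟨(Equiv.sumComm L M).trans σ, ?_⟩
    rw [um_transpose]
    congr 1
    ext c
    simp

lemma IB_transpose {M L N : Type*} [Fintype M] [Fintype L] [Fintype N]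
    [DecidableEq M] [DecidableEq L] [DecidableEq N] (A : Matrix N M R) :
    IB (M := L) Aᵀ = IA (L := L) A := by
  unfold IA IB
  congr 1
  ext x
  constructor
  · rintro ⟨σ', rfl⟩
    exact ⟨(Equiv.sumComm M L).trans σ', (bm_transpose A σ').symm⟩
  · rintro ⟨σ, rfl⟩
    refine ⟨(Equiv.sumComm L M).trans σ, ?_⟩
    rw [bm_transpose]
    congr 1
    ext c
    simp

lemma inj_of_unit_minor {K : Type*} [Field K] {a b : Type*} [Fintype a] [Fintype b]
    [DecidableEq b] (C : Matrix a b K) (f : b → a) (g : b → b)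
    (hg : Function.Bijective g) (hdet : (C.submatrix f g).det ≠ 0) :
    ∀ v, C.mulVec v = 0 → v = 0 := by
  intro v hv
  have h1 : (C.submatrix f g).mulVec (v ∘ g) = 0 := by
    funext i
    simp only [Matrix.mulVec, dotProduct, Matrix.submatrix_apply, Function.comp_apply,
      Pi.zero_apply]
    calc ∑ j, C (f i) (g j) * v (g j) = ∑ j', C (f i) j' * v j' :=
          Fintype.sum_bijective g hg _ _ (fun j => rfl)
      _ = 0 := congrFun hv (f i)
  haveI := (C.submatrix f g).invertibleOfIsUnitDet (Ne.isUnit hdet)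
  have h2 : v ∘ g = 0 := by
    have h3 := congrArg (fun w => (⅟(C.submatrix f g)).mulVec w) h1
    simpa [Matrix.mulVec_mulVec] using h3
  funext i
  obtain ⟨j, rfl⟩ := hg.2 i
  exact congrFun h2 j

lemma mccoy {m l n : ℕ} [Nontrivial R] {A : Matrix (Fin n) (Fin m) R}
    {B : Matrix (Fin l) (Fin n) R} (hBA : B * A = 0) {t t' : R}
    (ht : t ∈ A.minorsIdeal m) (ht' : t' ∈ B.minorsIdeal l)
    (hreg : IsSMulRegular R (t * t')) : m + l ≤ n := by
  classical
  have hnn : ¬ IsNilpotent (t * t') := by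
    rintro ⟨k, hk⟩
    have hr := hreg.pow k
    rw [hk] at hr
    exact one_ne_zero (reg_cancel hr (show (0:R) * 1 = 0 * 0 by ring))
  obtain ⟨p, hp, hnotin⟩ : ∃ p : Ideal R, p.IsPrime ∧ t * t' ∉ p := by
    by_contra hcon
    push_neg at hcon
    exact hnn (nilpotent_iff_mem_prime.mpr fun J hJ => hcon J hJ)
  haveI := hp
  set K := FractionRing (R ⧸ p) with hK
  set φ : R →+* K := (algebraMap (R ⧸ p) K).comp (Ideal.Quotient.mk p) with hφdef
  have hφ : ∀ x : R, x ∉ p → φ x ≠ 0 := by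
    intro x hx h0
    rw [hφdef, RingHom.comp_apply] at h0
    have := (map_eq_zero_iff _ (IsFractionRing.injective (R ⧸ p) K)).mp h0
    exact hx (Ideal.Quotient.eq_zero_iff_mem.mp this)
  have htp : t ∉ p := fun h => hnotin (Ideal.mul_mem_right _ _ h)
  have ht'p : t' ∉ p := fun h => hnotin (Ideal.mul_mem_left _ _ h)
  have hminorA : ∃ (f : Fin m → Fin n) (g : Fin m → Fin m),
      Function.Injective f ∧ Function.Injective g ∧ (A.submatrix f g).det ∉ p := by
    by_contra hcon
    push_neg at hcon
    refine htp (Ideal.span_le.mpr ?_ ht)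
    rintro x ⟨f, g, hf, hg, rfl⟩
    exact hcon f g hf hg
  have hminorB : ∃ (f : Fin l → Fin l) (g : Fin l → Fin n),
      Function.Injective f ∧ Function.Injective g ∧ (B.submatrix f g).det ∉ p := by
    by_contra hcon
    push_neg at hcon
    refine ht'p (Ideal.span_le.mpr ?_ ht')
    rintro x ⟨f, g, hf, hg, rfl⟩
    exact hcon f g hf hg
  obtain ⟨fA, gA, hfA, hgA, hdA⟩ := hminorA
  obtain ⟨fB, gB, hfB, hgB, hdB⟩ := hminorB
  set A' := A.map ⇑φ with hA'
  set B' := B.map ⇑φ with hB'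
  have hB'A' : B' * A' = 0 := by
    rw [hA', hB', ← Matrix.map_mul, hBA]
    ext i j
    simp
  have hdetA' : ((A'.submatrix fA gA).det : K) ≠ 0 := by
    have h9 : A'.submatrix fA gA = φ.mapMatrix (A.submatrix fA gA) := by
      ext i j; simp [hA', RingHom.mapMatrix_apply]
    rw [h9, ← RingHom.map_det]
    exact hφ _ hdA
  have hdetB' : ((B'ᵀ.submatrix gB fB).det : K) ≠ 0 := by
    have h9 : B'ᵀ.submatrix gB fB = (φ.mapMatrix (B.submatrix fB gB))ᵀ := by
      ext i j; simp [hB', RingHom.mapMatrix_apply]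
    rw [h9, Matrix.det_transpose, ← RingHom.map_det]
    exact hφ _ hdB
  have hAinj0 : ∀ v, A'.mulVec v = 0 → v = 0 :=
    inj_of_unit_minor A' fA gA (Finite.injective_iff_bijective.mp hgA) hdetA'
  have hBtinj0 : ∀ v, B'ᵀ.mulVec v = 0 → v = 0 :=
    inj_of_unit_minor B'ᵀ gB fB (Finite.injective_iff_bijective.mp hfB) hdetB'
  have hAinj : Function.Injective A'.mulVecLin := by
    intro x y hxy
    have : A'.mulVec (x - y) = 0 := by
      rw [Matrix.mulVec_sub]
      rw [show A'.mulVec x = A'.mulVec y from hxy]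
      simp
    have := hAinj0 _ this
    exact sub_eq_zero.mp this
  have hBtinj : Function.Injective B'ᵀ.mulVecLin := by
    intro x y hxy
    have : B'ᵀ.mulVec (x - y) = 0 := by
      rw [Matrix.mulVec_sub]
      rw [show B'ᵀ.mulVec x = B'ᵀ.mulVec y from hxy]
      simp
    have := hBtinj0 _ this
    exact sub_eq_zero.mp this
  have hrangeA : Module.finrank K ↥(LinearMap.range A'.mulVecLin) = m := by
    rw [LinearMap.finrank_range_of_inj hAinj, Module.finrank_fintype_fun_eq_card,
      Fintype.card_fin]
  have hrankBt : B'ᵀ.rank = l := by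
    rw [Matrix.rank, LinearMap.finrank_range_of_inj hBtinj, Module.finrank_fintype_fun_eq_card,
      Fintype.card_fin]
  have hrankB : B'.rank = l := by
    rw [← Matrix.rank_transpose]
    exact hrankBt
  have hsub : LinearMap.range A'.mulVecLin ≤ LinearMap.ker B'.mulVecLin := by
    rintro x ⟨y, rfl⟩
    rw [LinearMap.mem_ker]
    simp only [Matrix.mulVecLin_apply, Matrix.mulVec_mulVec, hB'A']
    rw [Matrix.mulVec_mulVec, hB'A', Matrix.zero_mulVec]
  have hker := LinearMap.finrank_range_add_finrank_ker B'.mulVecLin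
  rw [Module.finrank_fintype_fun_eq_card, Fintype.card_fin] at hker
  have hrB : Module.finrank K ↥(LinearMap.range B'.mulVecLin) = l := hrankB
  have hle : Module.finrank K ↥(LinearMap.range A'.mulVecLin)
      ≤ Module.finrank K ↥(LinearMap.ker B'.mulVecLin) :=
    Submodule.finrank_mono hsub
  omega

lemma dual_apply_eq_sum {k : ℕ} (f : Module.Dual R (Fin k → R)) (x : Fin k → R) :
    f x = ∑ i, x i * f (Pi.single i 1) := by
  have hx : x = ∑ i, x i • (Pi.single i 1 : Fin k → R) := by
    funext j
    rw [Finset.sum_apply]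
    rw [Finset.sum_eq_single j]
    · simp
    · intro b _ hbj
      simp [Pi.single_apply, Ne.symm hbj]
    · intro hj
      exact absurd (Finset.mem_univ j) hj
  conv_lhs => rw [hx]
  rw [map_sum]
  exact Finset.sum_congr rfl fun i _ => by rw [_root_.map_smul, smul_eq_mul]

lemma single_eq_ite {k : ℕ} (j : Fin k) :
    (Pi.single j (1 : R)) = fun k' => if k' = j then (1 : R) else 0 := by
  funext k'
  rw [Pi.single_apply]

lemma koszul_contradiction {m n : ℕ} (hn : n = m + 1)
    (A : Matrix (Fin n) (Fin m) R) (hproper : A.minorsIdeal m ≠ ⊤)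
    {x y z : R} (hx : x ∈ A.minorsIdeal m) (hy : y ∈ A.minorsIdeal m)
    (hz : z ∈ A.minorsIdeal m)
    (hxreg : IsSMulRegular R x)
    (hyreg : ∀ w, y * w ∈ Ideal.span {x} → w ∈ Ideal.span {x})
    (hzreg : ∀ w, z * w ∈ Ideal.span ({x, y} : Set R) → w ∈ Ideal.span ({x, y} : Set R)) :
    False := by
  classical
  subst hn
  set B₀ : Matrix (Fin 1) (Fin (m + 1)) R :=
    Matrix.of (fun _ i => (-1 : R) ^ (i : ℕ) * (A.submatrix i.succAbove id).det) with hB₀def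
  have hB₀A : B₀ * A = 0 := by
    ext q j
    rw [Matrix.mul_apply, Matrix.zero_apply]
    set Mj : Matrix (Fin (m + 1)) (Fin (m + 1)) R :=
      Matrix.of (fun i k => Fin.cases (A i j) (fun k' => A i k') k) with hMj
    have hdet0 : Mj.det = 0 := by
      refine Matrix.det_zero_of_column_eq (M := Mj) (i := 0) (j := j.succ)
        (Fin.succ_ne_zero j).symm ?_
      intro k
      simp [hMj]
    have hexp := Matrix.det_succ_column_zero Mj
    rw [hdet0] at hexp
    calc ∑ i, B₀ q i * A i j
        = ∑ i : Fin (m + 1), (-1 : R) ^ (i : ℕ) * Mj i 0 * (Mj.submatrix i.succAbove Fin.succ).det := by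
          refine Finset.sum_congr rfl fun i _ => ?_
          have h1 : Mj.submatrix i.succAbove Fin.succ = A.submatrix i.succAbove id := by
            ext a b
            simp [hMj]
          have h2 : Mj i 0 = A i j := by simp [hMj]
          rw [h1, h2, hB₀def]
          simp only [Matrix.of_apply]
          ring
      _ = 0 := hexp.symm
  have hent : ∀ i, B₀ 0 i ∈ IB (M := Fin m) B₀ := by
    intro i
    obtain ⟨σ, hσ⟩ := exists_equiv_inr (M := Fin m) (L := Fin 1) (N := Fin (m + 1))
      (by simp) (fun _ => i) (Function.injective_of_subsingleton _)
    have hb : bm (M := Fin m) B₀ σ = B₀ 0 i := by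
      unfold bm
      rw [Matrix.det_fin_one]
      simp [hσ]
    rw [← hb]
    exact Ideal.subset_span ⟨σ, rfl⟩
  have IAfin : A.minorsIdeal m = IA (L := Fin 1) A := minorsIdeal_A_eq rfl A
  have hIBA : IB (M := Fin m) B₀ = IA (L := Fin 1) A := by
    apply le_antisymm
    · rw [IB, Ideal.span_le]
      rintro w ⟨σ, rfl⟩
      have hb : bm (M := Fin m) B₀ σ = B₀ 0 (σ (Sum.inr 0)) := by
        unfold bm; rw [Matrix.det_fin_one]; rfl
      set i := σ (Sum.inr 0)
      obtain ⟨σ', hσ'⟩ := exists_equiv_inl (M := Fin m) (L := Fin 1) (N := Fin (m + 1))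
        (by simp) i.succAbove Fin.succAbove_right_injective
      have hum : um A σ' = (A.submatrix i.succAbove id).det := by
        unfold um; congr 1; ext a b; simp [hσ']
      rw [SetLike.mem_coe, hb, hB₀def]
      simp only [Matrix.of_apply]
      rw [← hum]
      exact Ideal.mul_mem_left _ _ (Ideal.subset_span ⟨σ', rfl⟩)
    · rw [IA, Ideal.span_le]
      rintro w ⟨σ, rfl⟩
      set i₀ := σ (Sum.inr 0) with hi₀
      have hne : ∀ j : Fin m, σ (Sum.inl j) ≠ i₀ := by
        intro j h
        exact absurd (σ.injective h) (by simp)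
      choose π hπ using fun j => Fin.exists_succAbove_eq (hne j)
      have hπinj : Function.Injective π := by
        intro a b hab
        apply Sum.inl_injective (σ.injective ?_)
        rw [← hπ a, ← hπ b, hab]
      set πe := Equiv.ofBijective π (Finite.injective_iff_bijective.mp hπinj) with hπe
      have h1 : um A σ = ((Equiv.Perm.sign πe : ℤ) : R) * (A.submatrix i₀.succAbove id).det := by
        unfold um
        have h2 : A.submatrix (⇑σ ∘ Sum.inl) id
            = (A.submatrix i₀.succAbove id).submatrix ⇑πe id := by
          ext a b
          simp [hπe, ← hπ a]
        rw [h2, Matrix.det_permute]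
      have h3 : (A.submatrix i₀.succAbove id).det = (-1 : R) ^ (i₀ : ℕ) * B₀ 0 i₀ := by
        rw [hB₀def]
        simp only [Matrix.of_apply]
        rw [← mul_assoc, ← pow_add, Even.neg_one_pow ⟨(i₀ : ℕ), rfl⟩, one_mul]
      rw [SetLike.mem_coe, h1, h3]
      exact Ideal.mul_mem_left _ _ (Ideal.mul_mem_left _ _ (hent i₀))
  have hrep : ∀ w ∈ IB (M := Fin m) B₀, ∃ v : Fin (m + 1) → R, (B₀.mulVec v) 0 = w := by
    intro w hw
    induction hw using Submodule.span_induction with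
    | mem w hw =>
      obtain ⟨ν, rfl⟩ := hw
      refine ⟨Pi.single (ν (Sum.inr 0)) 1, ?_⟩
      have hb : bm (M := Fin m) B₀ ν = B₀ 0 (ν (Sum.inr 0)) := by
        unfold bm; rw [Matrix.det_fin_one]; rfl
      rw [hb, Matrix.mulVec_single]
      simp
    | zero => exact ⟨0, by rw [Matrix.mulVec_zero]; rfl⟩
    | add a b _ _ iha ihb =>
      obtain ⟨va, hva⟩ := iha
      obtain ⟨vb, hvb⟩ := ihb
      exact ⟨va + vb, by rw [Matrix.mulVec_add]; simp [hva, hvb]⟩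
    | smul r a _ iha =>
      obtain ⟨va, hva⟩ := iha
      exact ⟨r • va, by rw [Matrix.mulVec_smul]; simp [hva, smul_eq_mul]⟩
  have hrev : ∀ v : Fin (m + 1) → R, (B₀.mulVec v) 0 ∈ IB (M := Fin m) B₀ := by
    intro v
    simp only [Matrix.mulVec, dotProduct]
    exact Ideal.sum_mem _ fun i _ => Ideal.mul_mem_right _ _ (hent i)
  rw [IAfin, ← hIBA] at hx hy hz
  have hxIA : x ∈ IA (L := Fin 1) A := hIBA ▸ hx
  have hyIA : y ∈ IA (L := Fin 1) A := hIBA ▸ hy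
  obtain ⟨vx, hvx⟩ := hrep x hx
  obtain ⟨vy, hvy⟩ := hrep y hy
  obtain ⟨vz, hvz⟩ := hrep z hz
  have hker : ∀ (a b : R) (va vb : Fin (m + 1) → R), (B₀.mulVec va) 0 = a →
      (B₀.mulVec vb) 0 = b → B₀.mulVec (b • va - a • vb) = 0 := by
    intro a b va vb hva hvb
    funext q
    have hq : q = 0 := Subsingleton.elim q 0
    subst hq
    rw [Matrix.mulVec_sub, Matrix.mulVec_smul, Matrix.mulVec_smul]
    simp only [Pi.sub_apply, Pi.smul_apply, smul_eq_mul, hva, hvb, Pi.zero_apply]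
    ring
  obtain ⟨wxy, hwxy⟩ := exact_at_mid A B₀ hB₀A finSumFinEquiv hxIA hyIA hx hy hxreg hxreg
    hyreg hyreg (hker x y vx vy hvx hvy)
  obtain ⟨wxz, hwxz⟩ := exact_at_mid A B₀ hB₀A finSumFinEquiv hxIA hyIA hx hy hxreg hxreg
    hyreg hyreg (hker x z vx vz hvx hvz)
  obtain ⟨wyz, hwyz⟩ := exact_at_mid A B₀ hB₀A finSumFinEquiv hxIA hyIA hx hy hxreg hxreg
    hyreg hyreg (hker y z vy vz hvy hvz)
  have hcomb : A.mulVec (z • wxy - y • wxz + x • wyz) = 0 := by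
    rw [Matrix.mulVec_add, Matrix.mulVec_sub, Matrix.mulVec_smul, Matrix.mulVec_smul,
      Matrix.mulVec_smul, hwxy, hwxz, hwyz]
    funext i
    simp only [Pi.add_apply, Pi.sub_apply, Pi.smul_apply, smul_eq_mul, Pi.zero_apply]
    ring
  have hcz := inj_of_reg A hxIA hxreg hcomb
  have hwxy_mem : ∀ j, wxy j ∈ Ideal.span ({x, y} : Set R) := by
    intro j
    apply hzreg
    have h7 := congrFun hcz j
    simp only [Pi.add_apply, Pi.sub_apply, Pi.smul_apply, smul_eq_mul, Pi.zero_apply] at h7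
    rw [Ideal.mem_span_pair]
    exact ⟨-wyz j, wxz j, by linear_combination -h7⟩
  choose pp qq hpq using fun j => Ideal.mem_span_pair.mp (hwxy_mem j)
  have husplit : y • (vx - A.mulVec qq) = x • (vy + A.mulVec pp) := by
    funext i
    have h7 := congrFun hwxy i
    have h8 : (A.mulVec wxy) i = x * (A.mulVec pp) i + y * (A.mulVec qq) i := by
      have h9 : wxy = x • pp + y • qq := by
        funext j
        simp only [Pi.add_apply, Pi.smul_apply, smul_eq_mul]
        linear_combination -hpq j
      rw [h9, Matrix.mulVec_add, Matrix.mulVec_smul, Matrix.mulVec_smul]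
      simp [smul_eq_mul]
    simp only [Pi.smul_apply, Pi.sub_apply, Pi.add_apply, smul_eq_mul, Pi.zero_apply] at h7 h8 ⊢
    linear_combination h8 - h7
  have hu1 : ∀ i, (vx - A.mulVec qq) i ∈ Ideal.span {x} := by
    intro i
    apply hyreg
    rw [Ideal.mem_span_singleton']
    refine ⟨(vy + A.mulVec pp) i, ?_⟩
    have h7 := congrFun husplit i
    simp only [Pi.smul_apply, smul_eq_mul] at h7
    linear_combination -h7
  choose u2 hu2 using fun i => Ideal.mem_span_singleton'.mp (hu1 i)
  have hfinal : x * (1 - (B₀.mulVec u2) 0) = 0 := by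
    have h9 : vx = A.mulVec qq + x • u2 := by
      funext i
      have h10 := hu2 i
      simp only [Pi.sub_apply] at h10
      simp only [Pi.add_apply, Pi.smul_apply, smul_eq_mul]
      linear_combination -h10
    have h10 := hvx
    rw [h9, Matrix.mulVec_add, Matrix.mulVec_smul] at h10
    have h11 : (B₀.mulVec (A.mulVec qq)) = 0 := by
      rw [Matrix.mulVec_mulVec, hB₀A]
      simp
    rw [h11] at h10
    simp only [Pi.add_apply, Pi.zero_apply, Pi.smul_apply, smul_eq_mul, zero_add] at h10
    linear_combination -h10
  have h12 := reg_cancel hxreg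
    (show x * (1 - (B₀.mulVec u2) 0) = x * 0 by rw [hfinal, mul_zero])
  have h13 : (1 : R) ∈ IB (M := Fin m) B₀ := by
    have h14 := hrev u2
    rwa [show (B₀.mulVec u2) 0 = 1 from by linear_combination -h12] at h14
  apply hproper
  rw [IAfin, ← hIBA]
  exact (Ideal.eq_top_iff_one _).mpr h13

end Interface

end StmtAux


open StmtAux

theorem stmt6 {R : Type*} [CommRing R] [IsNoetherianRing R]
    {m n l : ℕ} (hmn : m ≤ n) (hln : l ≤ n)
    (χ : (Fin m → R) →ₗ[R] (Fin n → R)) (lam : (Fin n → R) →ₗ[R] (Fin l → R))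
    (hcomplex : lam.comp χ = 0)
    (hχproper : χ.maxMinors ≠ ⊤) (g : ℕ)
    (hg1 : χ.maxMinors.gradeGE g) (hg2 : ¬ χ.maxMinors.gradeGE (g + 1))
    (hgbig : ((n : ℤ) - m - l).natAbs + 1 < g)
    (hlam : lam.maxMinors.gradeGE (((n : ℤ) - m - l).natAbs + 2))
    (hr : n - m = (n - m + 1 - g) + 1) :
    Function.Injective χ ∧ LinearMap.ker lam = LinearMap.range χ ∧
      Function.Injective lam.dualMap ∧
      LinearMap.ker χ.dualMap = LinearMap.range lam.dualMap ∧
      χ.maxMinors = lam.maxMinors := by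
  classical
  rcases subsingleton_or_nontrivial R with hsub | hnt
  · exact absurd ((Ideal.eq_top_iff_one _).mpr
      (by rw [Subsingleton.elim (1 : R) 0]; exact Submodule.zero_mem _)) hχproper
  set A := LinearMap.toMatrix' χ with hA
  set B := LinearMap.toMatrix' lam with hB
  have hBA : B * A = 0 := by
    rw [hA, hB, ← LinearMap.toMatrix'_comp, hcomplex]
    exact map_zero _
  have hIχ : χ.maxMinors = A.minorsIdeal m := by
    rw [LinearMap.maxMinors, min_eq_left hmn]
  have hIlam : lam.maxMinors = B.minorsIdeal l := by
    rw [LinearMap.maxMinors, min_eq_right hln]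
  have hg2le : (2 : ℕ) ≤ g := by omega
  obtain ⟨t, s, htI, hsI, htreg, hsreg⟩ := grade_two_extract hg1 hg2le
  obtain ⟨t', s', ht'I, hs'I, ht'reg, hs'reg⟩ := grade_two_extract hlam (by omega)
  rw [hIχ] at htI hsI
  rw [hIlam] at ht'I hs'I
  have hnml : n = m + l := by
    rcases (by omega : g = 2 ∨ (n = m + 1 ∧ 3 ≤ g)) with hgg | ⟨hn1, hg3⟩
    · omega
    · have hmc : m + l ≤ n := mccoy hBA htI ht'I (htreg.mul ht'reg)
      rcases (by omega : n = m + l ∨ l = 0) with h | hl0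
      · exact h
      · exfalso
        obtain ⟨xx, yy, zz, hxx, hyy, hzz, hxreg, hyreg, hzreg⟩ :=
          grade_three_extract hg1 hg3
        rw [hIχ] at hxx hyy hzz
        exact koszul_contradiction hn1 A (hIχ ▸ hχproper) hxx hyy hzz hxreg hyreg hzreg
  have hcard : m + l = n := hnml.symm
  set e₀ : (Fin m ⊕ Fin l) ≃ Fin n := finSumFinEquiv.trans (finCongr hcard) with he₀
  have hIAeq : A.minorsIdeal m = IA (L := Fin l) A := minorsIdeal_A_eq hcard A
  have hIBeq : B.minorsIdeal l = IB (M := Fin m) B := minorsIdeal_B_eq hcard B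
  have htIA : t ∈ IA (L := Fin l) A := hIAeq ▸ htI
  have hsIA : s ∈ IA (L := Fin l) A := hIAeq ▸ hsI
  have ht'IB : t' ∈ IB (M := Fin m) B := hIBeq ▸ ht'I
  have hs'IB : s' ∈ IB (M := Fin m) B := hIBeq ▸ hs'I
  have hAtBt : Aᵀ * Bᵀ = 0 := by
    rw [← Matrix.transpose_mul, hBA, Matrix.transpose_zero]
  set e₀' : (Fin l ⊕ Fin m) ≃ Fin n := (Equiv.sumComm (Fin l) (Fin m)).trans e₀ with he₀'
  have hIABt : IA (L := Fin m) Bᵀ = IB (M := Fin m) B := IA_transpose B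
  have hIBAt : IB (M := Fin l) Aᵀ = IA (L := Fin l) A := IB_transpose A
  have ht'IABt : t' ∈ IA (L := Fin m) Bᵀ := hIABt.symm ▸ ht'IB
  have hs'IABt : s' ∈ IA (L := Fin m) Bᵀ := hIABt.symm ▸ hs'IB
  have htIBAt : t ∈ IB (M := Fin l) Aᵀ := hIBAt.symm ▸ htIA
  have hsIBAt : s ∈ IB (M := Fin l) Aᵀ := hIBAt.symm ▸ hsIA
  have happχ : ∀ v, χ v = A.mulVec v := by
    intro v
    conv_lhs => rw [← Matrix.toLin'_toMatrix' χ]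
    rw [← hA, Matrix.toLin'_apply]
  have happlam : ∀ v, lam v = B.mulVec v := by
    intro v
    conv_lhs => rw [← Matrix.toLin'_toMatrix' lam]
    rw [← hB, Matrix.toLin'_apply]
  have hcolχ : ∀ (i : Fin n) (j : Fin m), χ (Pi.single j 1) i = A i j := by
    intro i j
    rw [hA, LinearMap.toMatrix'_apply, single_eq_ite]
  have hcollam : ∀ (i : Fin l) (j : Fin n), lam (Pi.single j 1) i = B i j := by
    intro i j
    rw [hB, LinearMap.toMatrix'_apply, single_eq_ite]
  have C1 : Function.Injective χ := by
    intro v w hvw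
    have h0 : A.mulVec (v - w) = 0 := by
      rw [Matrix.mulVec_sub, ← happχ, ← happχ, hvw]
      simp
    exact sub_eq_zero.mp (inj_of_reg A htIA htreg h0)
  have C2 : LinearMap.ker lam = LinearMap.range χ := by
    ext v
    rw [LinearMap.mem_ker, LinearMap.mem_range]
    constructor
    · intro h0
      rw [happlam] at h0
      obtain ⟨yv, hyv⟩ := exact_at_mid A B hBA e₀ htIA hsIA ht'IB hs'IB htreg
        ht'reg hsreg hs'reg h0
      exact ⟨yv, by rw [happχ, hyv]⟩
    · rintro ⟨yv, rfl⟩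
      have h1 := LinearMap.congr_fun hcomplex yv
      simpa using h1
  have C3 : Function.Injective lam.dualMap := by
    rw [injective_iff_map_eq_zero]
    intro f hf0
    have hfv : Bᵀ.mulVec (fun i => f (Pi.single i 1)) = 0 := by
      funext j
      have h1 : f (lam (Pi.single j 1)) = 0 := by
        have h2 := LinearMap.congr_fun hf0 (Pi.single j 1)
        rwa [LinearMap.dualMap_apply] at h2
      rw [dual_apply_eq_sum f (lam (Pi.single j 1))] at h1
      calc (Bᵀ.mulVec fun i => f (Pi.single i 1)) j
          = ∑ i, B i j * f (Pi.single i 1) := by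
            simp only [Matrix.mulVec, dotProduct, Matrix.transpose_apply]
        _ = ∑ i, lam (Pi.single j 1) i * f (Pi.single i 1) := by
            refine Finset.sum_congr rfl fun i _ => ?_
            rw [hcollam]
        _ = 0 := h1
    have h2 : (fun i => f (Pi.single i 1)) = 0 :=
      inj_of_reg Bᵀ ht'IABt ht'reg hfv
    apply LinearMap.ext
    intro xv
    rw [dual_apply_eq_sum f xv]
    have h3 : ∀ i : Fin l, f (Pi.single i 1) = 0 := fun i => congrFun h2 i
    simp [h3]
  have C4 : LinearMap.ker χ.dualMap = LinearMap.range lam.dualMap := by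
    ext f
    rw [LinearMap.mem_ker, LinearMap.mem_range]
    constructor
    · intro hf0
      have hAt : Aᵀ.mulVec (fun i => f (Pi.single i 1)) = 0 := by
        funext j
        have h1 : f (χ (Pi.single j 1)) = 0 := by
          have h2 := LinearMap.congr_fun hf0 (Pi.single j 1)
          rwa [LinearMap.dualMap_apply] at h2
        rw [dual_apply_eq_sum f (χ (Pi.single j 1))] at h1
        calc (Aᵀ.mulVec fun i => f (Pi.single i 1)) j
            = ∑ i, A i j * f (Pi.single i 1) := by
              simp only [Matrix.mulVec, dotProduct, Matrix.transpose_apply]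
          _ = ∑ i, χ (Pi.single j 1) i * f (Pi.single i 1) := by
              refine Finset.sum_congr rfl fun i _ => ?_
              rw [hcolχ]
          _ = 0 := h1
      obtain ⟨zv, hzv⟩ := exact_at_mid Bᵀ Aᵀ hAtBt e₀' ht'IABt hs'IABt htIBAt hsIBAt
        ht'reg htreg hs'reg hsreg hAt
      refine ⟨∑ i, zv i • LinearMap.proj i, ?_⟩
      apply LinearMap.ext
      intro xv
      have hLHS : (lam.dualMap (∑ i, zv i • (LinearMap.proj i : (Fin l → R) →ₗ[R] R))) xv
          = ∑ i, zv i * lam xv i := by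
        rw [LinearMap.dualMap_apply]
        simp [LinearMap.sum_apply, LinearMap.smul_apply, LinearMap.proj_apply, smul_eq_mul]
      rw [hLHS, dual_apply_eq_sum f xv]
      have h3 : ∀ i, lam xv i = ∑ j, B i j * xv j := fun i => by rw [happlam]; rfl
      calc ∑ i, zv i * lam xv i
          = ∑ i, ∑ j, zv i * (B i j * xv j) := by
            refine Finset.sum_congr rfl fun i _ => ?_
            rw [h3, Finset.mul_sum]
        _ = ∑ j, ∑ i, zv i * (B i j * xv j) := Finset.sum_comm
        _ = ∑ j, xv j * f (Pi.single j 1) := by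
            refine Finset.sum_congr rfl fun j _ => ?_
            have h4 := congrFun hzv j
            simp only [Matrix.mulVec, dotProduct, Matrix.transpose_apply] at h4
            rw [← h4, Finset.mul_sum]
            refine Finset.sum_congr rfl fun i _ => by ring
    · rintro ⟨φ, rfl⟩
      rw [LinearMap.dualMap_apply', LinearMap.dualMap_apply', LinearMap.comp_assoc,
        hcomplex, LinearMap.comp_zero]
  have C5 : χ.maxMinors = lam.maxMinors := by
    rw [hIχ, hIlam, hIAeq, hIBeq]
    exact IA_eq_IB A B hBA e₀ htIA hsIA ht'IB hs'IB htreg ht'reg hsreg hs'reg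
  exact ⟨C1, C2, C3, C4, C5⟩
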